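/- For n ≥ 2, α ∈ [0,1], and x ∈ [0,1], the α-Bernstein operator reproduces linear functions: ∑_{k=0}^{n} b_{n,k}^{α}(x) · (k/n) = x. -/
import Mathlib


open scoped BigOperators
open intervalIntegral Real

/-- The α-Bernstein basis function `b_{n,k}^α(x)` (for `n ≥ 2`), written with the
convention that binomial coefficients with out-of-range indices vanish. -/
noncomputable def alphaBernstein (n k : ℕ) (α x : ℝ) : ℝ :=
  (1 - α) * ((n - 2).choose k) * x ^ k * (1 - x) ^ (n - k - 1)
  + (if 2 ≤ k then (1 - α) * ((n - 2).choose (k - 2)) * x ^ (k - 1) * (1 - x) ^ (n - k) else 0)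
  + α * (n.choose k) * x ^ k * (1 - x) ^ (n - k)

/-- The normalized Riemann–Liouville fractional weight functional of order `β` on `[0,1]`:
`g ↦ Γ(β+1) ∫₀¹ (1-t)^(β-1)/Γ(β) · g t dt`. -/
noncomputable def fracWeight (β : ℝ) (g : ℝ → ℝ) : ℝ :=
  Real.Gamma (β + 1) * ∫ t in (0:ℝ)..1, (1 - t) ^ (β - 1) / Real.Gamma β * g t

/-- The fractional α-Bernstein–Kantorovich operator `K_{n,α}^β`. -/
noncomputable def fracKantorovich (n : ℕ) (α β : ℝ) (f : ℝ → ℝ) (x : ℝ) : ℝ :=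
  ∑ k ∈ Finset.range (n + 1),
    alphaBernstein n k α x * fracWeight β (fun t => f ((k + t) / (n + 1)))

/-- The correction factor `a_{n,k} = k(n+1)(β+1)/(n(kβ+1))`. -/
noncomputable def corrFactor (n k : ℕ) (β : ℝ) : ℝ :=
  (k : ℝ) * (n + 1) * (β + 1) / (n * (k * β + 1))

/-- The modified fractional α-Bernstein–Kantorovich operator `A_{n,α}^β`. -/
noncomputable def modFracKantorovich (n : ℕ) (α β : ℝ) (f : ℝ → ℝ) (x : ℝ) : ℝ :=
  ∑ k ∈ Finset.range (n + 1),
    alphaBernstein n k α x *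
      fracWeight β (fun t => f (corrFactor n k β * ((k + t) / (n + 1))))

/-- The bivariate fractional α-Bernstein–Kantorovich operator `K_{n,m,α₁,α₂}^{β₁,β₂}`. -/
noncomputable def bivFracKantorovich (n m : ℕ) (α₁ α₂ β₁ β₂ : ℝ) (f : ℝ → ℝ → ℝ)
    (x y : ℝ) : ℝ :=
  ∑ k ∈ Finset.range (n + 1), ∑ j ∈ Finset.range (m + 1),
    alphaBernstein n k α₁ x * alphaBernstein m j α₂ y *
      (Real.Gamma (β₁ + 1) * Real.Gamma (β₂ + 1) *
        ∫ t in (0:ℝ)..1, ∫ s in (0:ℝ)..1,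
          (1 - t) ^ (β₁ - 1) * (1 - s) ^ (β₂ - 1) / (Real.Gamma β₁ * Real.Gamma β₂) *
            f ((k + t) / (n + 1)) ((j + s) / (m + 1)))

lemma bern_sum (m : ℕ) (x : ℝ) :
    ∑ k ∈ Finset.range (m+1), (m.choose k : ℝ) * x^k * (1-x)^(m-k) = 1 := by
  have h := add_pow x (1-x) m
  simp only [add_sub_cancel, one_pow] at h
  calc ∑ k ∈ Finset.range (m+1), (m.choose k : ℝ) * x^k * (1-x)^(m-k)
      = ∑ k ∈ Finset.range (m+1), x^k * (1-x)^(m-k) * (m.choose k : ℝ) :=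
        Finset.sum_congr rfl fun k _ => by ring
    _ = 1 := h.symm

lemma bern_first (m : ℕ) (x : ℝ) :
    ∑ k ∈ Finset.range (m+1), (k:ℝ) * (m.choose k : ℝ) * x^k * (1-x)^(m-k) = m * x := by
  have h := bernsteinPolynomial.sum_smul ℝ m
  have h2 := congrArg (Polynomial.eval x) h
  simp only [Polynomial.eval_finset_sum, bernsteinPolynomial, nsmul_eq_mul,
    Polynomial.eval_mul, Polynomial.eval_pow, Polynomial.eval_sub, Polynomial.eval_one,
    Polynomial.eval_X, Polynomial.eval_natCast] at h2
  rw [← h2]; apply Finset.sum_congr rfl; intro k hk; ring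

lemma T1 (m : ℕ) (x : ℝ) :
    ∑ k ∈ Finset.range (m+3), (k:ℝ) * (m.choose k : ℝ) * x^k * (1-x)^(m+1-k)
      = m * x * (1-x) := by
  rw [← Finset.sum_subset (Finset.range_subset_range.mpr (by omega : m+1 ≤ m+3))
      (fun k _ hk => by
        have : m < k := by simpa using hk
        simp [Nat.choose_eq_zero_of_lt this])]
  calc ∑ k ∈ Finset.range (m+1), (k:ℝ) * (m.choose k : ℝ) * x^k * (1-x)^(m+1-k)
      = ∑ k ∈ Finset.range (m+1), ((k:ℝ) * (m.choose k : ℝ) * x^k * (1-x)^(m-k)) * (1-x) := by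
        apply Finset.sum_congr rfl; intro k hk
        have hkm : k ≤ m := by have := Finset.mem_range.mp hk; omega
        rw [show m+1-k = (m-k)+1 by omega, pow_succ]; ring
    _ = m * x * (1-x) := by rw [← Finset.sum_mul, bern_first]

lemma T2 (m : ℕ) (x : ℝ) :
    ∑ k ∈ Finset.range (m+3), (if 2 ≤ k then ((m.choose (k-2)) : ℝ) * x^(k-1) * (1-x)^(m+2-k) * k else 0)
      = x * (m * x + 2) := by
  rw [Finset.sum_range_succ', Finset.sum_range_succ']
  have hpeel : ∀ i : ℕ, (if 2 ≤ i + 1 + 1 then ((m.choose (i+1+1-2)) : ℝ) * x^(i+1+1-1) * (1-x)^(m+2-(i+1+1)) * ((i+1+1 : ℕ) : ℝ) else 0)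
      = ((i:ℝ) * (m.choose i : ℝ) * x^i * (1-x)^(m-i)) * x + ((m.choose i : ℝ) * x^i * (1-x)^(m-i)) * (2*x) := by
    intro i
    rw [if_pos (by omega), show i+1+1-2 = i from by omega, show i+1+1-1 = i+1 from by omega,
      show m+2-(i+1+1) = m-i from by omega]
    push_cast; ring
  simp only [hpeel]
  norm_num
  rw [Finset.sum_add_distrib, ← Finset.sum_mul, ← Finset.sum_mul, bern_first, bern_sum]
  ring

theorem alphaBernstein_first_moment (n : ℕ) (hn : 2 ≤ n) (α x : ℝ)
    (hα : α ∈ Set.Icc (0:ℝ) 1) (hx : x ∈ Set.Icc (0:ℝ) 1) :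
    ∑ k ∈ Finset.range (n + 1), alphaBernstein n k α x * ((k : ℝ) / n) = x := by
  obtain ⟨m, rfl⟩ : ∃ m, n = m + 2 := ⟨n - 2, by omega⟩
  have hm : ((m : ℝ) + 2) ≠ 0 := by positivity
  have key : ∀ k ∈ Finset.range (m + 3),
      alphaBernstein (m+2) k α x * ((k : ℝ) / ((m : ℝ) + 2)) =
        (1-α)/((m:ℝ)+2) * ((k:ℝ) * (m.choose k : ℝ) * x^k * (1-x)^(m+1-k))
        + (1-α)/((m:ℝ)+2) * (if 2 ≤ k then ((m.choose (k-2)) : ℝ) * x^(k-1) * (1-x)^(m+2-k) * k else 0)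
        + α/((m:ℝ)+2) * ((k:ℝ) * ((m+2).choose k : ℝ) * x^k * (1-x)^(m+2-k)) := by
    intro k hk
    simp only [alphaBernstein, Nat.add_sub_cancel, show m+2-k-1 = m+1-k from by omega]
    by_cases h : 2 ≤ k
    · rw [if_pos h, if_pos h]; ring
    · rw [if_neg h, if_neg h]; ring
  have hcast : ((m + 2 : ℕ) : ℝ) = (m : ℝ) + 2 := by push_cast; ring
  rw [show m + 2 + 1 = m + 3 from rfl]
  calc ∑ k ∈ Finset.range (m + 3), alphaBernstein (m+2) k α x * ((k : ℝ) / ((m+2 : ℕ) : ℝ))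
      = ∑ k ∈ Finset.range (m + 3), ((1-α)/((m:ℝ)+2) * ((k:ℝ) * (m.choose k : ℝ) * x^k * (1-x)^(m+1-k))
        + (1-α)/((m:ℝ)+2) * (if 2 ≤ k then ((m.choose (k-2)) : ℝ) * x^(k-1) * (1-x)^(m+2-k) * k else 0)
        + α/((m:ℝ)+2) * ((k:ℝ) * ((m+2).choose k : ℝ) * x^k * (1-x)^(m+2-k))) := by
        rw [hcast]; exact Finset.sum_congr rfl key
    _ = (1-α)/((m:ℝ)+2) * (∑ k ∈ Finset.range (m + 3), (k:ℝ) * (m.choose k : ℝ) * x^k * (1-x)^(m+1-k))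
        + (1-α)/((m:ℝ)+2) * (∑ k ∈ Finset.range (m + 3), if 2 ≤ k then ((m.choose (k-2)) : ℝ) * x^(k-1) * (1-x)^(m+2-k) * k else 0)
        + α/((m:ℝ)+2) * (∑ k ∈ Finset.range (m + 3), (k:ℝ) * ((m+2).choose k : ℝ) * x^k * (1-x)^(m+2-k)) := by
        rw [Finset.sum_add_distrib, Finset.sum_add_distrib, Finset.mul_sum, Finset.mul_sum, Finset.mul_sum]
    _ = x := by
        rw [T1, T2, show (∑ k ∈ Finset.range (m + 3), (k:ℝ) * ((m+2).choose k : ℝ) * x^k * (1-x)^(m+2-k)) = ((m+2 : ℕ) : ℝ) * x from bern_first (m+2) x]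
        push_cast
        field_simp
        ring
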